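/- Let k be a field of characteristic ≠ 2 and (V, q) a nondegenerate quadratic space of dimension n ≡ 2 (mod 4) with trivial signed discriminant, so that C₀(q) ≅ A⁺ × A⁻. Then the canonical involution τ₀ of C₀(q) (induced by reversal of products of vectors) exchanges the two factors, giving a k-algebra isomorphism A⁺ ≅ (A⁻)^op. -/

import Mathlib

open CliffordAlgebra

section ListAux

variable {R : Type*} [Ring R]

lemma anticomm_mul_prod (a : R) :
    ∀ (L : List R), (∀ x ∈ L, a * x = -(x * a)) →
      a * L.prod = ((-1 : ℤ) ^ L.length) • (L.prod * a)
  | [], _ => by simp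
  | x :: L, h => by
    have hx : a * x = -(x * a) := h x List.mem_cons_self
    have ih := anticomm_mul_prod a L fun y hy => h y (List.mem_cons_of_mem x hy)
    rw [List.prod_cons, List.length_cons, ← mul_assoc, hx, neg_mul, mul_assoc, ih,
      mul_smul_comm, ← neg_smul, pow_succ, mul_neg_one, mul_assoc]

lemma anticomm_prod_mul (a : R) (L : List R) (h : ∀ x ∈ L, a * x = -(x * a)) :
    L.prod * a = ((-1 : ℤ) ^ L.length) • (a * L.prod) := by
  have h1 := anticomm_mul_prod a L h
  have h2 : ((-1 : ℤ) ^ L.length) * ((-1 : ℤ) ^ L.length) = 1 := by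
    rw [← pow_add]; exact Even.neg_one_pow ⟨L.length, rfl⟩
  calc L.prod * a = (((-1 : ℤ) ^ L.length) * ((-1 : ℤ) ^ L.length)) • (L.prod * a) := by
        rw [h2, one_smul]
    _ = ((-1 : ℤ) ^ L.length) • (a * L.prod) := by rw [← smul_smul, ← h1]

lemma anticomm_reverse_prod :
    ∀ (L : List R), L.Pairwise (fun x y => x * y = -(y * x)) →
      L.reverse.prod = ((-1 : ℤ) ^ (L.length.choose 2)) • L.prod
  | [], _ => by simp
  | x :: L, h => by
    obtain ⟨hx, hL⟩ := List.pairwise_cons.mp h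
    have ih := anticomm_reverse_prod L hL
    have hr := anticomm_prod_mul x L hx
    rw [List.reverse_cons, List.prod_append, List.prod_cons, List.prod_nil, mul_one, ih,
      smul_mul_assoc, hr, smul_smul, ← pow_add, List.prod_cons, List.length_cons]
    congr 2
    rw [Nat.choose_succ_succ, Nat.choose_one_right]
    norm_num
    omega

end ListAux

section CliffordAux

variable {k V : Type} [Field k] [AddCommGroup V] [Module k V] (Q : QuadraticForm k V)

lemma prod_map_ι_mem_evenOdd :
    ∀ (L : List V), (L.map (ι Q)).prod ∈ evenOdd Q (L.length : ZMod 2)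
  | [] => by
    simpa using (SetLike.one_mem_graded (A := evenOdd Q) :
      (1 : CliffordAlgebra Q) ∈ evenOdd Q 0)
  | x :: L => by
    have h := SetLike.mul_mem_graded (ι_mem_evenOdd_one Q x) (prod_map_ι_mem_evenOdd L)
    have hc : ((L.length + 1 : ℕ) : ZMod 2) = 1 + (L.length : ZMod 2) := by
      push_cast; ring
    rw [List.map_cons, List.prod_cons, List.length_cons, hc]
    exact h

lemma reverse_map_ι_prod :
    ∀ (L : List V), reverse (Q := Q) ((L.map (ι Q)).prod) = ((L.map (ι Q)).reverse).prod
  | [] => by simp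
  | x :: L => by
    rw [List.map_cons, List.prod_cons, reverse.map_mul, reverse_map_ι_prod L, reverse_ι,
      List.reverse_cons, List.prod_append, List.prod_cons, List.prod_nil, mul_one]

lemma ortho_prod_sq :
    ∀ (L : List V), (L.map (ι Q)).Pairwise (fun x y => x * y = -(y * x)) →
      (L.map (ι Q)).prod * (L.map (ι Q)).prod
        = ((-1 : ℤ) ^ (L.length.choose 2)) • algebraMap k (CliffordAlgebra Q) (L.map Q).prod
  | [], _ => by simp
  | x :: L, h => by
    rw [List.map_cons] at h
    obtain ⟨hx, hL⟩ := List.pairwise_cons.mp h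
    have ih := ortho_prod_sq L hL
    have hr := anticomm_prod_mul (ι Q x) (L.map (ι Q)) hx
    rw [List.map_cons, List.prod_cons, List.map_cons, List.prod_cons, List.length_cons]
    calc ι Q x * (L.map (ι Q)).prod * (ι Q x * (L.map (ι Q)).prod)
        = ι Q x * ((L.map (ι Q)).prod * ι Q x) * (L.map (ι Q)).prod := by
          rw [mul_assoc, mul_assoc, mul_assoc]
      _ = ((-1 : ℤ) ^ (L.map (ι Q)).length) •
            (ι Q x * ι Q x * ((L.map (ι Q)).prod * (L.map (ι Q)).prod)) := by
          rw [hr, mul_smul_comm, smul_mul_assoc, mul_assoc, mul_assoc]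
          congr 1
          rw [mul_assoc]
      _ = ((-1 : ℤ) ^ ((L.length + 1).choose 2)) •
            algebraMap k (CliffordAlgebra Q) (Q x * (L.map Q).prod) := by
          rw [ι_sq_scalar, ih, mul_smul_comm, smul_smul, ← pow_add, ← map_mul,
            List.length_map]
          congr 2
          rw [Nat.choose_succ_succ, Nat.choose_one_right]

end CliffordAux

/-- A finite-dimensional central simple algebra. -/
def IsCSA (k A : Type) [Field k] [Ring A] [Algebra k A] : Prop :=
  Algebra.IsCentral k A ∧ IsSimpleRing A ∧ FiniteDimensional k A

set_option maxHeartbeats 2000000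
set_option synthInstance.maxHeartbeats 400000

/-- For a nondegenerate quadratic space of dimension `n ≡ 2 (mod 4)` with
trivial signed discriminant, writing `C₀(q) ≅ A⁺ × A⁻`, the canonical
involution (induced by reversal, which preserves the even part) exchanges the
two factors, giving `A⁺ ≅ (A⁻)^op`. -/
theorem even_clifford_factors_opposite
    (k V : Type) [Field k] [AddCommGroup V] [Module k V]
    (hchar : (2 : k) ≠ 0)
    (m : ℕ) (hmodd : Odd m) (b : Module.Basis (Fin (2 * m)) k V)
    (Q : QuadraticForm k V)
    (hQ : (QuadraticMap.polarBilin Q).SeparatingLeft)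
    (hdisc : ∃ c : k, c ≠ 0 ∧
      (-1 : k) ^ m *
        (LinearMap.toMatrix₂ b b (QuadraticMap.polarBilin Q)).det = c ^ 2) :
    (∀ x ∈ CliffordAlgebra.evenOdd Q 0,
      CliffordAlgebra.reverse (Q := Q) x ∈ CliffordAlgebra.evenOdd Q 0) ∧
    ∀ (A B : Type) [Ring A] [Ring B] [Algebra k A] [Algebra k B],
      IsCSA k A → IsCSA k B →
      Nonempty (CliffordAlgebra.even Q ≃ₐ[k] (A × B)) →
      Nonempty (A ≃ₐ[k] Bᵐᵒᵖ) := by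
  constructor
  · exact fun x hx => (CliffordAlgebra.reverse_mem_evenOdd_iff Q).mpr hx
  intro A B _ _ _ _ hA hB hφ
  obtain ⟨φ⟩ := hφ
  obtain ⟨hAc, hAs, hAf⟩ := hA
  obtain ⟨hBc, hBs, hBf⟩ := hB
  haveI := hAs; haveI := hBs; haveI := hAc; haveI := hBc
  haveI : Nontrivial A := inferInstance
  haveI : Nontrivial B := inferInstance
  haveI : FiniteDimensional k V := Module.Finite.of_basis b
  haveI : Invertible (2 : k) := invertibleOfNonzero hchar
  set n := 2 * m with hn
  have hm1 : 1 ≤ m := by rcases hmodd with ⟨j, hj⟩; omega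
  have hnpos : 0 < n := by omega
  have hfr : Module.finrank k V = n := by
    rw [Module.finrank_eq_card_basis b, Fintype.card_fin]
  have hsymm : (QuadraticMap.polarBilin Q).IsSymm := by
    refine ⟨fun x y => ?_⟩
    simp [QuadraticMap.polarBilin_apply_apply, QuadraticMap.polar_comm]
  obtain ⟨v0, hv0⟩ := LinearMap.BilinForm.exists_orthogonal_basis hsymm
  set v : Module.Basis (Fin n) k V := v0.reindex (finCongr hfr) with hv
  have horth : ∀ i j : Fin n, i ≠ j → QuadraticMap.polar Q (v i) (v j) = 0 := by
    intro i j hij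
    have h := (LinearMap.isOrthoᵢ_def.mp hv0) ((finCongr hfr).symm i)
      ((finCongr hfr).symm j) (fun hh => hij ((finCongr hfr).symm.injective hh))
    simpa [hv, Module.Basis.reindex_apply, QuadraticMap.polarBilin_apply_apply] using h
  have hQv : ∀ i : Fin n, Q (v i) ≠ 0 := by
    intro i hQi
    have hzero : (QuadraticMap.polarBilin Q) (v i) = 0 := by
      apply Module.Basis.ext v
      intro j
      rcases eq_or_ne i j with rfl | hij
      · simp [QuadraticMap.polarBilin_apply_apply, QuadraticMap.polar_self, hQi]
      · simpa [QuadraticMap.polarBilin_apply_apply] using horth i j hij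
    have : v i = 0 := hQ (v i) (fun y => by rw [hzero]; rfl)
    exact Module.Basis.ne_zero v i this
  have anticom : ∀ i j : Fin n, i ≠ j →
      CliffordAlgebra.ι Q (v i) * CliffordAlgebra.ι Q (v j)
        = -(CliffordAlgebra.ι Q (v j) * CliffordAlgebra.ι Q (v i)) := by
    intro i j hij
    have h := CliffordAlgebra.ι_mul_ι_add_swap (Q := Q) (v i) (v j)
    rw [horth i j hij, map_zero] at h
    exact eq_neg_of_add_eq_zero_left h
  set LV : List V := (List.finRange n).map v with hLV
  set Lι : List (CliffordAlgebra Q) := LV.map (ι Q) with hLι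
  set δ : CliffordAlgebra Q := Lι.prod with hδ
  have hLVlen : LV.length = n := by simp [hLV]
  have hLιlen : Lι.length = n := by simp [hLι, hLV]
  have hpairι : Lι.Pairwise (fun x y => x * y = -(y * x)) := by
    rw [hLι, hLV, List.map_map, List.pairwise_map]
    exact (List.pairwise_lt_finRange n).imp (fun {i j} hij => anticom i j (ne_of_lt hij))
  have hδeven : δ ∈ CliffordAlgebra.evenOdd Q 0 := by
    have h := prod_map_ι_mem_evenOdd Q LV
    rw [← hLι, ← hδ, hLVlen] at h
    have hcast : ((n : ℕ) : ZMod 2) = 0 := by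
      rw [hn, Nat.cast_mul, ZMod.natCast_self, zero_mul]
    rwa [hcast] at h
  -- anticommutation of basis vectors with δ
  have hvj : ∀ j : Fin n, ι Q (v j) * δ = -(δ * ι Q (v j)) := by
    intro j
    have hjlt : (j : ℕ) < (List.finRange n).length := by simpa using j.isLt
    have hsplit : List.finRange n =
        (List.finRange n).take j ++ j :: (List.finRange n).drop (j + 1) := by
      conv_lhs => rw [← List.take_append_drop (j : ℕ) (List.finRange n)]
      rw [List.drop_eq_getElem_cons hjlt]
      simp
    set l1 : List (Fin n) := (List.finRange n).take j with hl1
    set l2 : List (Fin n) := (List.finRange n).drop (j + 1) with hl2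
    have hplt : (l1 ++ j :: l2).Pairwise (· < ·) := by
      rw [← hsplit]; exact List.pairwise_lt_finRange n
    obtain ⟨hp1, hp2, hp12⟩ := List.pairwise_append.mp hplt
    have hl1j : ∀ i ∈ l1, i ≠ j := fun i hi =>
      ne_of_lt (hp12 i hi j List.mem_cons_self)
    have hl2j : ∀ i ∈ l2, i ≠ j := fun i hi =>
      (ne_of_lt ((List.pairwise_cons.mp hp2).1 i hi)).symm
    set P1 : CliffordAlgebra Q := ((l1.map v).map (ι Q)).prod with hP1
    set P2 : CliffordAlgebra Q := ((l2.map v).map (ι Q)).prod with hP2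
    have hδsplit : δ = P1 * (ι Q (v j) * P2) := by
      rw [hδ, hLι, hLV, hsplit]
      simp [List.map_append, List.prod_append, List.map_cons, List.prod_cons, hP1, hP2]
    have hanti1 : ∀ x ∈ (l1.map v).map (ι Q), ι Q (v j) * x = -(x * ι Q (v j)) := by
      intro x hx
      obtain ⟨u, hu, rfl⟩ := List.mem_map.mp hx
      obtain ⟨i, hi, rfl⟩ := List.mem_map.mp hu
      exact anticom j i (Ne.symm (hl1j i hi))
    have hanti2 : ∀ x ∈ (l2.map v).map (ι Q), ι Q (v j) * x = -(x * ι Q (v j)) := by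
      intro x hx
      obtain ⟨u, hu, rfl⟩ := List.mem_map.mp hx
      obtain ⟨i, hi, rfl⟩ := List.mem_map.mp hu
      exact anticom j i (Ne.symm (hl2j i hi))
    have e1 : ι Q (v j) * δ = ((-1 : ℤ) ^ l1.length) •
        (P1 * (algebraMap k (CliffordAlgebra Q) (Q (v j)) * P2)) := by
      rw [hδsplit, ← mul_assoc, hP1, anticomm_mul_prod _ _ hanti1, smul_mul_assoc,
        mul_assoc, ← mul_assoc (ι Q (v j)) (ι Q (v j)), CliffordAlgebra.ι_sq_scalar]
      rw [List.length_map, List.length_map]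
    have e2 : δ * ι Q (v j) = ((-1 : ℤ) ^ l2.length) •
        (P1 * (algebraMap k (CliffordAlgebra Q) (Q (v j)) * P2)) := by
      rw [hδsplit, mul_assoc, mul_assoc, hP2, anticomm_prod_mul _ _ hanti2,
        mul_smul_comm, mul_smul_comm, ← mul_assoc (ι Q (v j)) (ι Q (v j)),
        CliffordAlgebra.ι_sq_scalar]
      rw [List.length_map, List.length_map]
    have hlen1 : l1.length = (j : ℕ) := by
      rw [hl1, List.length_take, List.length_finRange]
      exact min_eq_left (le_of_lt j.isLt)
    have hlen2 : l2.length = n - ((j : ℕ) + 1) := by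
      rw [hl2, List.length_drop, List.length_finRange]
    have hodd : Odd (l1.length + l2.length) := by
      refine ⟨m - 1, ?_⟩
      have := j.isLt
      omega
    have hsign : ((-1 : ℤ) ^ l1.length) = -((-1 : ℤ) ^ l2.length) := by
      have hprod : ((-1 : ℤ) ^ l1.length) * ((-1 : ℤ) ^ l2.length) = -1 := by
        rw [← pow_add]; exact Odd.neg_one_pow hodd
      have hsq : ((-1 : ℤ) ^ l2.length) * ((-1 : ℤ) ^ l2.length) = 1 := by
        rw [← pow_add]; exact Even.neg_one_pow ⟨l2.length, rfl⟩
      calc ((-1 : ℤ) ^ l1.length)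
          = ((-1 : ℤ) ^ l1.length) * (((-1 : ℤ) ^ l2.length) * ((-1 : ℤ) ^ l2.length)) := by
            rw [hsq, mul_one]
        _ = -((-1 : ℤ) ^ l2.length) := by rw [← mul_assoc, hprod, neg_one_mul]
    rw [e1, e2, hsign, neg_smul]
  have hvec : ∀ w : V, ι Q w * δ = -(δ * ι Q w) := by
    have hmap : (LinearMap.mulRight k δ).comp (CliffordAlgebra.ι Q)
        = (-(LinearMap.mulLeft k δ)).comp (CliffordAlgebra.ι Q) :=
      Module.Basis.ext v (fun j => by simpa using hvj j)
    intro w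
    simpa using LinearMap.congr_fun hmap w
  have hvec' : ∀ w : V, δ * ι Q w = -(ι Q w * δ) := by
    intro w; rw [hvec w, neg_neg]
  have hδcomm : ∀ x ∈ CliffordAlgebra.evenOdd Q 0, δ * x = x * δ := by
    intro x hx
    induction x, hx using CliffordAlgebra.even_induction with
    | algebraMap r => exact (Algebra.commutes r δ).symm
    | add x y hx hy ihx ihy => rw [mul_add, add_mul, ihx, ihy]
    | ι_mul_ι_mul m₁ m₂ x hx ih =>
      have hpair : δ * (ι Q m₁ * ι Q m₂) = (ι Q m₁ * ι Q m₂) * δ := by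
        rw [← mul_assoc, hvec' m₁, neg_mul, mul_assoc, hvec' m₂, mul_neg, neg_neg,
          ← mul_assoc]
      rw [← mul_assoc, hpair, mul_assoc, ih, ← mul_assoc]
  have hC2 : n.choose 2 = m * (2 * m - 1) := by
    rw [Nat.choose_two_right, hn]
    have h2 : 2 * m * (2 * m - 1) = m * (2 * m - 1) * 2 := by ring
    omega
  have hoddC : Odd (n.choose 2) := by
    rw [hC2]; exact hmodd.mul ⟨m - 1, by omega⟩
  have hδsq : ∃ c : k, c ≠ 0 ∧ δ * δ = algebraMap k (CliffordAlgebra Q) c := by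
    have h := ortho_prod_sq Q LV (by rw [← hLι]; exact hpairι)
    rw [← hLι, ← hδ, hLVlen, Odd.neg_one_pow hoddC, neg_one_zsmul] at h
    refine ⟨-((LV.map Q).prod), ?_, ?_⟩
    · have h0 : (0 : k) ∉ LV.map Q := by
        intro h0
        obtain ⟨u, hu, hQu⟩ := List.mem_map.mp h0
        obtain ⟨i, hi, rfl⟩ := List.mem_map.mp hu
        exact hQv i hQu
      simpa using List.prod_ne_zero h0
    · rw [h, map_neg]
  have honec : (1 : CliffordAlgebra Q) ≠ 0 := by
    intro h1
    have hE1 : (1 : CliffordAlgebra.even Q) = 0 := Subtype.ext (by simpa using h1)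
    have h2 : (1 : A × B) = 0 := by rw [← map_one φ, hE1, map_zero]
    exact one_ne_zero (α := A) (congrArg Prod.fst h2)
  have hδne : δ ≠ 0 := by
    obtain ⟨c, hc, hsq⟩ := hδsq
    intro h0
    rw [h0, zero_mul] at hsq
    have h2 : c • (1 : CliffordAlgebra Q) = 0 := by
      rw [← Algebra.algebraMap_eq_smul_one, ← hsq]
    rcases smul_eq_zero.mp h2 with h | h
    · exact hc h
    · exact honec h
  have hrevδ : CliffordAlgebra.reverse (Q := Q) δ = -δ := by
    have h1 := reverse_map_ι_prod Q LV
    rw [← hLι, ← hδ] at h1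
    have h2 := anticomm_reverse_prod Lι hpairι
    rw [← hδ, hLιlen] at h2
    rw [h1, h2, Odd.neg_one_pow hoddC, neg_one_zsmul]
  -- the even subalgebra
  have hmemE : ∀ x : CliffordAlgebra Q,
      x ∈ CliffordAlgebra.even Q ↔ x ∈ CliffordAlgebra.evenOdd Q 0 :=
    fun x => Iff.rfl
  set D : CliffordAlgebra.even Q := ⟨δ, (hmemE δ).mpr hδeven⟩ with hD
  set ρ : CliffordAlgebra.even Q → CliffordAlgebra.even Q := fun x =>
    ⟨CliffordAlgebra.reverse (Q := Q) (x : CliffordAlgebra Q),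
      (hmemE _).mpr ((CliffordAlgebra.reverse_mem_evenOdd_iff Q).mpr ((hmemE _).mp x.2))⟩
    with hρ
  have ρcoe : ∀ x : CliffordAlgebra.even Q,
      ((ρ x : CliffordAlgebra.even Q) : CliffordAlgebra Q)
        = CliffordAlgebra.reverse (Q := Q) (x : CliffordAlgebra Q) := fun x => rfl
  have ρ_mul : ∀ x y, ρ (x * y) = ρ y * ρ x := by
    intro x y
    apply Subtype.ext
    simp [ρcoe, CliffordAlgebra.reverse.map_mul]
  have ρ_add : ∀ x y, ρ (x + y) = ρ x + ρ y := fun x y =>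
    Subtype.ext (by simp [ρcoe])
  have ρ_smul : ∀ (r : k) x, ρ (r • x) = r • ρ x := fun r x =>
    Subtype.ext (by simp [ρcoe])
  have ρ_one : ρ 1 = 1 := Subtype.ext (by simp [ρcoe])
  have ρ_invol : ∀ x, ρ (ρ x) = x := fun x =>
    Subtype.ext (by simp [ρcoe, CliffordAlgebra.reverse_reverse])
  have ρ_D : ρ D = -D := Subtype.ext (by simp [ρcoe, hD, hrevδ])
  -- transporting through φ
  have hφcomm : ∀ z : A × B, φ D * z = z * φ D := by
    intro z
    have h1 : D * φ.symm z = φ.symm z * D :=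
      Subtype.ext (by simpa using hδcomm _ ((hmemE _).mp (φ.symm z).2))
    calc φ D * z = φ (D * φ.symm z) := by rw [map_mul, AlgEquiv.apply_symm_apply]
      _ = φ (φ.symm z * D) := by rw [h1]
      _ = z * φ D := by rw [map_mul, AlgEquiv.apply_symm_apply]
  obtain ⟨s, hs⟩ : ∃ s : k, algebraMap k A s = (φ D).1 := by
    have hmem : (φ D).1 ∈ Subalgebra.center k A := by
      rw [Subalgebra.mem_center_iff]
      intro a
      have h := congrArg Prod.fst (hφcomm (a, 0))
      simpa using h.symm
    exact Algebra.mem_bot.mp (hAc.out hmem)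
  obtain ⟨t, ht⟩ : ∃ t : k, algebraMap k B t = (φ D).2 := by
    have hmem : (φ D).2 ∈ Subalgebra.center k B := by
      rw [Subalgebra.mem_center_iff]
      intro a
      have h := congrArg Prod.snd (hφcomm (0, a))
      simpa using h.symm
    exact Algebra.mem_bot.mp (hBc.out hmem)
  obtain ⟨c, hc0, hcsq⟩ := hδsq
  have hDD : D * D = algebraMap k (CliffordAlgebra.even Q) c :=
    Subtype.ext (by simpa using hcsq)
  have hinjA : Function.Injective (algebraMap k A) := (algebraMap k A).injective
  have hinjB : Function.Injective (algebraMap k B) := (algebraMap k B).injective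
  have hφDD : φ D * φ D = algebraMap k (A × B) c := by
    rw [← map_mul, hDD, AlgEquiv.commutes]
  have hss : s * s = c := by
    apply hinjA
    have h := congrArg Prod.fst hφDD
    simpa [Prod.algebraMap_apply, ← hs, map_mul] using h
  have htt : t * t = c := by
    apply hinjB
    have h := congrArg Prod.snd hφDD
    simpa [Prod.algebraMap_apply, ← ht, map_mul] using h
  have hst : s ≠ t := by
    intro hst'
    have hφD : φ D = algebraMap k (A × B) s := by
      rw [Prod.algebraMap_apply]
      apply Prod.ext
      · exact hs.symm
      · rw [← ht, hst']
    have hDalg : D = algebraMap k (CliffordAlgebra.even Q) s := by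
      have h := congrArg φ.symm hφD
      rwa [AlgEquiv.symm_apply_apply, AlgEquiv.commutes] at h
    have hδalg : δ = algebraMap k (CliffordAlgebra Q) s := by
      have h := congrArg Subtype.val hDalg
      simpa using h
    set w : V := v ⟨0, hnpos⟩ with hw
    have h1 := hvec w
    rw [hδalg] at h1
    have e1 : ι Q w * algebraMap k (CliffordAlgebra Q) s = s • ι Q w := by
      rw [← Algebra.commutes, ← Algebra.smul_def]
    have h2 : s • ι Q w = -(s • ι Q w) := by
      calc s • ι Q w = ι Q w * algebraMap k (CliffordAlgebra Q) s := e1.symm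
        _ = -(algebraMap k (CliffordAlgebra Q) s * ι Q w) := h1
        _ = -(s • ι Q w) := by rw [← Algebra.smul_def]
    have h3 : s • ι Q w = 0 := by
      have h4 : (2 : k) • (s • ι Q w) = 0 := by
        rw [two_smul]
        nth_rewrite 2 [h2]
        simp
      rcases smul_eq_zero.mp h4 with h | h
      · exact absurd h hchar
      · exact h
    have hδ0 : δ = 0 := by
      rcases smul_eq_zero.mp h3 with h | h
      · rw [hδalg, h, map_zero]
      · have hmem : ι Q w ∈ Lι := by
          rw [hLι]
          exact List.mem_map_of_mem
            (by rw [hLV]; exact List.mem_map_of_mem (List.mem_finRange _))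
        rw [hδ]
        exact List.prod_eq_zero (h ▸ hmem)
    exact hδne hδ0
  have hts : t = -s := by
    have hstst : s * s = t * t := by rw [hss, htt]
    have h5 : (s - t) * (s + t) = 0 := by linear_combination hstst
    rcases mul_eq_zero.mp h5 with h | h
    · exact absurd (sub_eq_zero.mp h) hst
    · exact eq_neg_of_add_eq_zero_right h
  have hs0 : s ≠ 0 := by
    intro h
    exact hst (by rw [h, hts, h, neg_zero])
  have h2s : ((2 * s)⁻¹ : k) * s = 2⁻¹ := by
    rw [mul_inv, mul_assoc, inv_mul_cancel₀ hs0, mul_one]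
  have h2h : (2⁻¹ : k) + 2⁻¹ = 1 := by
    rw [← two_mul, mul_inv_cancel₀ hchar]
  set eP : CliffordAlgebra.even Q := φ.symm (1, 0) with heP
  have hφe : φ ((2⁻¹ : k) • 1 + ((2 * s)⁻¹ : k) • D) = ((1 : A), (0 : B)) := by
    rw [map_add, map_smul, map_smul, map_one]
    have hφD : φ D = ((s • 1 : A), ((-s) • 1 : B)) := by
      apply Prod.ext
      · rw [← hs, Algebra.algebraMap_eq_smul_one]
      · rw [← ht, hts, Algebra.algebraMap_eq_smul_one]
    rw [hφD]
    apply Prod.ext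
    · show (2⁻¹ : k) • (1 : A) + ((2 * s)⁻¹ : k) • (s • (1 : A)) = 1
      rw [smul_smul, h2s, ← add_smul, h2h, one_smul]
    · show (2⁻¹ : k) • (1 : B) + ((2 * s)⁻¹ : k) • ((-s) • (1 : B)) = 0
      rw [smul_smul, mul_neg, h2s, ← add_smul, add_neg_cancel, zero_smul]
  have heq : eP = (2⁻¹ : k) • 1 + ((2 * s)⁻¹ : k) • D := by
    rw [heP, ← hφe, AlgEquiv.symm_apply_apply]
  have hρe : ρ eP = 1 - eP := by
    rw [heq, ρ_add, ρ_smul, ρ_smul, ρ_one, ρ_D, smul_neg]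
    have h1 : (1 : CliffordAlgebra.even Q) = (2⁻¹ : k) • 1 + (2⁻¹ : k) • 1 := by
      rw [← add_smul, h2h, one_smul]
    nth_rewrite 2 [h1]
    abel
  set T : A × B → A × B := fun z => φ (ρ (φ.symm z)) with hT
  have hφeP : φ eP = ((1 : A), (0 : B)) := by rw [heP, AlgEquiv.apply_symm_apply]
  have hT1 : T ((1 : A), (0 : B)) = ((0 : A), (1 : B)) := by
    rw [hT]
    show φ (ρ (φ.symm (1, 0))) = (0, 1)
    rw [← heP, hρe, map_sub, map_one, hφeP]
    apply Prod.ext <;> simp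
  have hTone : T 1 = 1 := by
    rw [hT]; show φ (ρ (φ.symm 1)) = 1
    rw [map_one, ρ_one, map_one]
  have hTadd : ∀ z w, T (z + w) = T z + T w := by
    intro z w
    show φ (ρ (φ.symm (z + w))) = φ (ρ (φ.symm z)) + φ (ρ (φ.symm w))
    rw [map_add, ρ_add, map_add]
  have hTsmul : ∀ (r : k) z, T (r • z) = r • T z := by
    intro r z
    show φ (ρ (φ.symm (r • z))) = r • φ (ρ (φ.symm z))
    rw [map_smul, ρ_smul, map_smul]
  have hTmul : ∀ z w, T (z * w) = T w * T z := by
    intro z w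
    show φ (ρ (φ.symm (z * w))) = φ (ρ (φ.symm w)) * φ (ρ (φ.symm z))
    rw [map_mul, ρ_mul, map_mul]
  have hTinvol : ∀ z, T (T z) = z := by
    intro z
    show φ (ρ (φ.symm (φ (ρ (φ.symm z))))) = z
    rw [AlgEquiv.symm_apply_apply, ρ_invol, AlgEquiv.apply_symm_apply]
  have hT0 : T 0 = 0 := by
    have h := hTsmul 0 0
    simpa using h
  have hTneg : ∀ z, T (-z) = -T z := by
    intro z
    have h := hTsmul (-1) z
    simpa using h
  have hT01 : T ((0 : A), (1 : B)) = ((1 : A), (0 : B)) := by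
    have h0 : ((0 : A), (1 : B)) = 1 - ((1 : A), (0 : B)) := by
      apply Prod.ext <;> simp
    rw [h0, sub_eq_add_neg, hTadd, hTneg, hTone, hT1]
    apply Prod.ext <;> simp
  have hTa : ∀ a : A, T (a, 0) = ((0 : A), (T ((a : A), (0 : B))).2) := by
    intro a
    have h1 : ((a, (0 : B)) : A × B) = (1, 0) * (a, 0) := by
      apply Prod.ext <;> simp
    calc T (a, 0) = T ((1, 0) * (a, 0)) := by rw [← h1]
      _ = T (a, 0) * T (1, 0) := hTmul _ _
      _ = T (a, 0) * (0, 1) := by rw [hT1]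
      _ = (0, (T ((a : A), (0 : B))).2) := by
          apply Prod.ext
          · rw [Prod.fst_mul]; simp
          · rw [Prod.snd_mul]; simp
  have hTb : ∀ bb : B, (T ((0 : A), bb)).2 = 0 := by
    intro bb
    have h1 : ((0 : A), bb) = ((0 : A), (1 : B)) * ((0 : A), bb) := by
      apply Prod.ext <;> simp
    calc (T ((0 : A), bb)).2 = (T (((0 : A), (1 : B)) * ((0 : A), bb))).2 := by rw [← h1]
      _ = (T ((0 : A), bb) * T ((0 : A), (1 : B))).2 := by rw [hTmul]
      _ = (T ((0 : A), bb)).2 * 0 := by rw [hT01, Prod.snd_mul]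
      _ = 0 := mul_zero _
  let f0 : A →+* Bᵐᵒᵖ :=
    { toFun := fun a => MulOpposite.op (T (a, 0)).2
      map_one' := by
        show MulOpposite.op (T ((1 : A), (0 : B))).2 = 1
        rw [hT1]
        rfl
      map_mul' := fun a a' => by
        have h1 : ((a * a', (0 : B)) : A × B) = (a, 0) * (a', 0) := by
          apply Prod.ext <;> simp
        show MulOpposite.op (T (a * a', 0)).2 =
          MulOpposite.op (T (a, 0)).2 * MulOpposite.op (T (a', 0)).2
        rw [h1, hTmul, Prod.snd_mul, MulOpposite.op_mul]
      map_zero' := by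
        show MulOpposite.op (T ((0 : A), (0 : B))).2 = 0
        have h0 : (((0 : A), (0 : B)) : A × B) = 0 := rfl
        rw [h0, hT0]
        rfl
      map_add' := fun a a' => by
        have h1 : ((a + a', (0 : B)) : A × B) = (a, 0) + (a', 0) := by
          apply Prod.ext <;> simp
        show MulOpposite.op (T (a + a', 0)).2 =
          MulOpposite.op (T (a, 0)).2 + MulOpposite.op (T (a', 0)).2
        rw [h1, hTadd, Prod.snd_add, MulOpposite.op_add] }
  let f : A →ₐ[k] Bᵐᵒᵖ :=
    { toRingHom := f0
      commutes' := fun r => by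
        show MulOpposite.op (T (algebraMap k A r, 0)).2 = algebraMap k Bᵐᵒᵖ r
        have h1 : ((algebraMap k A r, (0 : B)) : A × B) = r • (1, 0) := by
          apply Prod.ext <;> simp [Algebra.algebraMap_eq_smul_one]
        rw [h1, hTsmul, hT1, MulOpposite.algebraMap_apply]
        show MulOpposite.op ((r • (((0 : A), (1 : B)) : A × B)).2) = _
        simp [Algebra.algebraMap_eq_smul_one]
    }
  have hfapply : ∀ a : A, f a = MulOpposite.op (T (a, 0)).2 := fun a => rfl
  have hTinj : Function.Injective T := Function.LeftInverse.injective hTinvol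
  have finj : Function.Injective f := by
    rw [injective_iff_map_eq_zero]
    intro a ha
    rw [hfapply] at ha
    have h2 : (T ((a : A), (0 : B))).2 = 0 := by
      simpa using congrArg MulOpposite.unop ha
    have h3 : T ((a : A), (0 : B)) = 0 := by
      rw [hTa a, h2]
      rfl
    have h4 : ((a : A), (0 : B)) = ((0 : A), (0 : B)) := by
      apply hTinj
      rw [h3, show (((0 : A), (0 : B)) : A × B) = 0 from rfl, hT0]
    exact congrArg Prod.fst h4
  have fsurj : Function.Surjective f := by
    intro w
    set z : A × B := T ((0 : A), w.unop) with hz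
    refine ⟨z.1, ?_⟩
    have hTz : T z = ((0 : A), w.unop) := by rw [hz, hTinvol]
    have hsplitz : z = (z.1, (0 : B)) + ((0 : A), z.2) := by
      apply Prod.ext <;> simp
    have h5 : T (z.1, (0 : B)) + T ((0 : A), z.2) = ((0 : A), w.unop) := by
      rw [← hTadd, ← hsplitz, hTz]
    have h6 := congrArg Prod.snd h5
    rw [Prod.snd_add, hTb z.2, add_zero] at h6
    rw [hfapply, h6]
    exact MulOpposite.op_unop w
  exact ⟨AlgEquiv.ofBijective f ⟨finj, fsurj⟩⟩
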